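/- For every polynomial function w : ℝ² → ℝ of degree at most 3, one has on K the identity ∇²w − Π_HHJ(∇²w) = Σ_{i=1}^{4} a_i (∇²φ_i − Π_HHJ(∇²φ_i)), where a₁ = |K|^{1/2} ∂³w/∂x₁³, a₂ = |K|^{1/2} ∂³w/∂x₁²∂x₂, a₃ = |K|^{1/2} ∂³w/∂x₁∂x₂², a₄ = |K|^{1/2} ∂³w/∂x₂³. -/

import Mathlib

noncomputable section
open MeasureTheory

namespace PaperStmt

/-- Euclidean dot product on `ℝ²`. -/
def dotp (v w : ℝ × ℝ) : ℝ := v.1 * w.1 + v.2 * w.2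

/-- Euclidean length on `ℝ²`. -/
def len (v : ℝ × ℝ) : ℝ := Real.sqrt (v.1 ^ 2 + v.2 ^ 2)

/-- Cross product (determinant) of two planar vectors. -/
def crossp (v w : ℝ × ℝ) : ℝ := v.1 * w.2 - v.2 * w.1

/-- The vertices `p 0, p 1, p 2` form a nondegenerate triangle listed counterclockwise. -/
def Ccw (p : Fin 3 → ℝ × ℝ) : Prop := 0 < crossp (p 1 - p 0) (p 2 - p 0)

/-- Vector of the edge `e_i` opposite vertex `p i`, oriented counterclockwise
(from `p (i+1)` to `p (i−1)`). -/
def edgeVec (p : Fin 3 → ℝ × ℝ) (i : Fin 3) : ℝ × ℝ := p (i - 1) - p (i + 1)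

/-- Length `|e_i|` of the edge opposite vertex `p i`. -/
def elen (p : Fin 3 → ℝ × ℝ) (i : Fin 3) : ℝ := len (edgeVec p i)

/-- Unit tangent `t_i = (p_{i−1} − p_{i+1})/|e_i|` of edge `e_i`. -/
def tvec (p : Fin 3 → ℝ × ℝ) (i : Fin 3) : ℝ × ℝ := (elen p i)⁻¹ • edgeVec p i

/-- Outward unit normal `n_i` of edge `e_i` (clockwise rotation of the tangent,
which points outward for a counterclockwise triangle). -/
def nvec (p : Fin 3 → ℝ × ℝ) (i : Fin 3) : ℝ × ℝ := ((tvec p i).2, -(tvec p i).1)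

/-- Interior angle `θ_i` of the triangle at the vertex `p i`. -/
def angleAt (p : Fin 3 → ℝ × ℝ) (i : Fin 3) : ℝ :=
  Real.arccos (dotp (p (i + 1) - p i) (p (i - 1) - p i) /
    (len (p (i + 1) - p i) * len (p (i - 1) - p i)))

/-- Outer product `v wᵀ` of two planar (column) vectors, as a `2 × 2` matrix. -/
def outerProd (v w : ℝ × ℝ) : Matrix (Fin 2) (Fin 2) ℝ :=
  !![v.1 * w.1, v.1 * w.2; v.2 * w.1, v.2 * w.2]

/-- Basis matrices `φ_HHJ^i = −(1/(2 sin θ_{i−1} sin θ_{i+1})) (t_{i−1} t_{i+1}ᵀ + t_{i+1} t_{i−1}ᵀ)`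
of the lowest-order Hellan–Herrmann–Johnson element. -/
def phiHHJ (p : Fin 3 → ℝ × ℝ) (i : Fin 3) : Matrix (Fin 2) (Fin 2) ℝ :=
  (-(2 * Real.sin (angleAt p (i - 1)) * Real.sin (angleAt p (i + 1)))⁻¹) •
    (outerProd (tvec p (i - 1)) (tvec p (i + 1)) + outerProd (tvec p (i + 1)) (tvec p (i - 1)))

/-- The quadratic form `vᵀ τ v` of a `2 × 2` matrix on a planar vector. -/
def qf (τ : Matrix (Fin 2) (Fin 2) ℝ) (v : ℝ × ℝ) : ℝ :=
  v.1 * (τ 0 0 * v.1 + τ 0 1 * v.2) + v.2 * (τ 1 0 * v.1 + τ 1 1 * v.2)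

end PaperStmt

namespace PaperStmt

/-- Directional derivative of `f` along `v`. -/
def dderiv (v : ℝ × ℝ) (f : ℝ × ℝ → ℝ) : ℝ × ℝ → ℝ := fun x => fderiv ℝ f x v

/-- Second directional derivative `D²f[u, v]`. -/
def d2 (u v : ℝ × ℝ) (f : ℝ × ℝ → ℝ) : ℝ × ℝ → ℝ := dderiv u (dderiv v f)

/-- Third directional derivative `D³f[u, v, w]`. -/
def d3 (u v w : ℝ × ℝ) (f : ℝ × ℝ → ℝ) : ℝ × ℝ → ℝ := dderiv u (dderiv v (dderiv w f))

end PaperStmt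

namespace PaperStmt

/-- Area `|K|` of the (counterclockwise) triangle with vertices `p`. -/
def area (p : Fin 3 → ℝ × ℝ) : ℝ := crossp (p 1 - p 0) (p 2 - p 0) / 2

/-- Centroid `M_K` of the triangle with vertices `p`. -/
def centroid (p : Fin 3 → ℝ × ℝ) : ℝ × ℝ := (3 : ℝ)⁻¹ • (p 0 + p 1 + p 2)

/-- The (closed) triangle `K` with vertices `p`, as a subset of `ℝ²`. -/
def tri (p : Fin 3 → ℝ × ℝ) : Set (ℝ × ℝ) := convexHull ℝ {p 0, p 1, p 2}

/-- The cubic polynomials `φ₁, φ₂, φ₃, φ₄` centered at the centroid: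
`φ₁ = (x₁−M₁)³/(6|K|^{1/2})`, `φ₂ = (x₁−M₁)²(x₂−M₂)/(2|K|^{1/2})`,
`φ₃ = (x₁−M₁)(x₂−M₂)²/(2|K|^{1/2})`, `φ₄ = (x₂−M₂)³/(6|K|^{1/2})`. -/
def phiK (p : Fin 3 → ℝ × ℝ) : Fin 4 → ℝ × ℝ → ℝ :=
  ![fun x => (x.1 - (centroid p).1) ^ 3 / (6 * Real.sqrt (area p)),
    fun x => (x.1 - (centroid p).1) ^ 2 * (x.2 - (centroid p).2) / (2 * Real.sqrt (area p)),
    fun x => (x.1 - (centroid p).1) * (x.2 - (centroid p).2) ^ 2 / (2 * Real.sqrt (area p)),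
    fun x => (x.2 - (centroid p).2) ^ 3 / (6 * Real.sqrt (area p))]

/-- Hessian `∇²f` of a scalar function on `ℝ²`, as a `2 × 2` matrix field. -/
def hess (f : ℝ × ℝ → ℝ) (x : ℝ × ℝ) : Matrix (Fin 2) (Fin 2) ℝ :=
  !![d2 (1, 0) (1, 0) f x, d2 (1, 0) (0, 1) f x;
     d2 (0, 1) (1, 0) f x, d2 (0, 1) (0, 1) f x]

/-- Frobenius inner product `A : B` of two `2 × 2` matrices. -/
def frob (A B : Matrix (Fin 2) (Fin 2) ℝ) : ℝ := ∑ i : Fin 2, ∑ j : Fin 2, A i j * B i j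

/-- Mean value `(1/|e_j|) ∫_{e_j} g ds` of `g` over the edge `e_j` (with respect to
arclength measure), computed by the unit-speed-normalized parametrization of `e_j`. -/
def edgeAvg (p : Fin 3 → ℝ × ℝ) (j : Fin 3) (g : ℝ × ℝ → ℝ) : ℝ :=
  ∫ s in (0:ℝ)..1, g (p (j + 1) + s • (p (j - 1) - p (j + 1)))

/-- The Hellan–Herrmann–Johnson interpolant
`Π_HHJ τ = Σ_{j=1}^{3} ((1/|e_j|) ∫_{e_j} n_jᵀ τ n_j ds) φ_HHJ^j` of a
matrix-valued field `τ`, a constant symmetric matrix. -/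
def PiHHJ (p : Fin 3 → ℝ × ℝ) (τ : ℝ × ℝ → Matrix (Fin 2) (Fin 2) ℝ) :
    Matrix (Fin 2) (Fin 2) ℝ :=
  ∑ j : Fin 3, edgeAvg p j (fun x => qf (τ x) (nvec p j)) • phiHHJ p j

/-- The constants `γ^{ij} = (1/|K|) ∫_K ((I − Π_HHJ)∇²φ_i) : ((I − Π_HHJ)∇²φ_j) dx`. -/
def gammaHHJ (p : Fin 3 → ℝ × ℝ) (i j : Fin 4) : ℝ :=
  (area p)⁻¹ *
    ∫ x in tri p,
      frob (hess (phiK p i) x - PiHHJ p (hess (phiK p i)))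
           (hess (phiK p j) x - PiHHJ p (hess (phiK p j)))

/-- Coefficients `a₁ = |K|^{1/2} ∂³w/∂x₁³`, `a₂ = |K|^{1/2} ∂³w/∂x₁²∂x₂`,
`a₃ = |K|^{1/2} ∂³w/∂x₁∂x₂²`, `a₄ = |K|^{1/2} ∂³w/∂x₂³` (the third partial
derivatives of a cubic polynomial being constant, they are evaluated at `0`). -/
def acoef (p : Fin 3 → ℝ × ℝ) (w : ℝ × ℝ → ℝ) : Fin 4 → ℝ :=
  ![Real.sqrt (area p) * d3 (1, 0) (1, 0) (1, 0) w 0,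
    Real.sqrt (area p) * d3 (1, 0) (1, 0) (0, 1) w 0,
    Real.sqrt (area p) * d3 (1, 0) (0, 1) (0, 1) w 0,
    Real.sqrt (area p) * d3 (0, 1) (0, 1) (0, 1) w 0]

end PaperStmt

namespace PaperStmt

/-- `f : ℝ² → ℝ` is a polynomial function of (total) degree at most `l`. -/
def IsPolyFun (l : ℕ) (f : ℝ × ℝ → ℝ) : Prop :=
  ∃ q : MvPolynomial (Fin 2) ℝ, q.totalDegree ≤ l ∧
    ∀ x : ℝ × ℝ, f x = MvPolynomial.eval ![x.1, x.2] q

end PaperStmt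

-- AUX START
namespace HHJAux
open PaperStmt

/-! ### Cubic polynomial machinery -/

def cube (c0 c1 c2 c3 c4 c5 c6 c7 c8 c9 : ℝ) : ℝ × ℝ → ℝ :=
  fun x => c0 + c1 * x.1 + c2 * x.2 + c3 * (x.1 * x.1) + c4 * (x.1 * x.2) + c5 * (x.2 * x.2)
    + c6 * (x.1 * x.1 * x.1) + c7 * (x.1 * x.1 * x.2) + c8 * (x.1 * x.2 * x.2)
    + c9 * (x.2 * x.2 * x.2)

lemma cube_hasFDerivAt (c0 c1 c2 c3 c4 c5 c6 c7 c8 c9 : ℝ) (x : ℝ × ℝ) :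
    HasFDerivAt (cube c0 c1 c2 c3 c4 c5 c6 c7 c8 c9)
      ((c1 + 2*c3*x.1 + c4*x.2 + 3*c6*(x.1*x.1) + 2*c7*(x.1*x.2) + c8*(x.2*x.2)) •
          ContinuousLinearMap.fst ℝ ℝ ℝ +
        (c2 + c4*x.1 + 2*c5*x.2 + c7*(x.1*x.1) + 2*c8*(x.1*x.2) + 3*c9*(x.2*x.2)) •
          ContinuousLinearMap.snd ℝ ℝ ℝ) x := by
  have h1 : HasFDerivAt (fun y : ℝ × ℝ => y.1) (ContinuousLinearMap.fst ℝ ℝ ℝ) x :=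
    hasFDerivAt_fst
  have h2 : HasFDerivAt (fun y : ℝ × ℝ => y.2) (ContinuousLinearMap.snd ℝ ℝ ℝ) x :=
    hasFDerivAt_snd
  have H := (((((((((hasFDerivAt_const c0 x).add (h1.const_mul c1)).add
    (h2.const_mul c2)).add ((h1.mul h1).const_mul c3)).add
    ((h1.mul h2).const_mul c4)).add ((h2.mul h2).const_mul c5)).add
    (((h1.mul h1).mul h1).const_mul c6)).add (((h1.mul h1).mul h2).const_mul c7)).add
    (((h1.mul h2).mul h2).const_mul c8)).add (((h2.mul h2).mul h2).const_mul c9)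
  refine (H.congr_fderiv ?_)
  refine ContinuousLinearMap.ext fun v => ?_
  simp [ContinuousLinearMap.smul_apply]
  ring

lemma dderiv_cube (c0 c1 c2 c3 c4 c5 c6 c7 c8 c9 : ℝ) (v : ℝ × ℝ) :
    dderiv v (cube c0 c1 c2 c3 c4 c5 c6 c7 c8 c9) =
      cube (c1*v.1 + c2*v.2) (2*c3*v.1 + c4*v.2) (c4*v.1 + 2*c5*v.2)
        (3*c6*v.1 + c7*v.2) (2*c7*v.1 + 2*c8*v.2) (c8*v.1 + 3*c9*v.2) 0 0 0 0 := by
  funext x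
  show fderiv ℝ _ x v = _
  rw [(cube_hasFDerivAt c0 c1 c2 c3 c4 c5 c6 c7 c8 c9 x).fderiv]
  simp [cube, ContinuousLinearMap.smul_apply]
  ring

open MvPolynomial in
lemma exists_cube (q : MvPolynomial (Fin 2) ℝ) (hq : q.totalDegree ≤ 3) :
    ∃ c0 c1 c2 c3 c4 c5 c6 c7 c8 c9 : ℝ, ∀ x : ℝ × ℝ,
      MvPolynomial.eval ![x.1, x.2] q = cube c0 c1 c2 c3 c4 c5 c6 c7 c8 c9 x := by
  classical
  set S : ℕ → ℕ → ℝ := fun a b =>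
    ∑ m ∈ q.support.filter (fun m => ((m 0 : ℕ), (m 1 : ℕ)) = (a, b)), q.coeff m with hS
  set t : Finset (ℕ × ℕ) :=
    (Finset.range 4 ×ˢ Finset.range 4).filter (fun ab => ab.1 + ab.2 ≤ 3) with ht
  refine ⟨S 0 0, S 1 0, S 0 1, S 2 0, S 1 1, S 0 2, S 3 0, S 2 1, S 1 2, S 0 3, fun x => ?_⟩
  rw [MvPolynomial.eval_eq']
  have hmap : ∀ m ∈ q.support, ((m 0 : ℕ), (m 1 : ℕ)) ∈ t := by
    intro m hm
    have h1 : m.sum (fun _ e => e) ≤ 3 := le_trans (MvPolynomial.le_totalDegree hm) hq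
    have h2 : m.sum (fun _ e => e) = m 0 + m 1 := by
      rw [Finsupp.sum_fintype _ _ (fun _ => rfl), Fin.sum_univ_two]
    simp only [ht, Finset.mem_filter, Finset.mem_product, Finset.mem_range]
    omega
  rw [← Finset.sum_fiberwise_of_maps_to hmap (fun m => q.coeff m * ∏ i, ![x.1, x.2] i ^ m i)]
  have hfib : ∀ y ∈ t,
      (∑ m ∈ q.support.filter (fun m => ((m 0 : ℕ), (m 1 : ℕ)) = y),
        q.coeff m * ∏ i, ![x.1, x.2] i ^ m i) = S y.1 y.2 * (x.1 ^ y.1 * x.2 ^ y.2) := by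
    intro y _
    rw [hS]
    rw [Finset.sum_mul]
    refine Finset.sum_congr rfl fun m hm => ?_
    have h := (Finset.mem_filter.mp hm).2
    have h0 : m 0 = y.1 := by rw [Prod.ext_iff] at h; exact h.1
    have h1 : m 1 = y.2 := by rw [Prod.ext_iff] at h; exact h.2
    rw [Fin.prod_univ_two]
    simp [h0, h1]
  rw [Finset.sum_congr rfl hfib]
  have htexp : t = ({(0,0),(1,0),(2,0),(3,0),(0,1),(1,1),(2,1),(0,2),(1,2),(0,3)} :
      Finset (ℕ × ℕ)) := by
    rw [ht]; decide
  rw [htexp]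
  rw [Finset.sum_insert (by decide), Finset.sum_insert (by decide),
    Finset.sum_insert (by decide), Finset.sum_insert (by decide),
    Finset.sum_insert (by decide), Finset.sum_insert (by decide),
    Finset.sum_insert (by decide), Finset.sum_insert (by decide),
    Finset.sum_insert (by decide), Finset.sum_singleton]
  simp only [cube]
  ring

/-! ### Hessian of a cubic -/

lemma d2_cube (u v : ℝ × ℝ) (c0 c1 c2 c3 c4 c5 c6 c7 c8 c9 : ℝ) :
    d2 u v (cube c0 c1 c2 c3 c4 c5 c6 c7 c8 c9) =
      cube ((2*c3*v.1 + c4*v.2)*u.1 + (c4*v.1 + 2*c5*v.2)*u.2)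
        (2*(3*c6*v.1 + c7*v.2)*u.1 + (2*c7*v.1 + 2*c8*v.2)*u.2)
        ((2*c7*v.1 + 2*c8*v.2)*u.1 + 2*(c8*v.1 + 3*c9*v.2)*u.2)
        0 0 0 0 0 0 0 := by
  show dderiv u (dderiv v _) = _
  rw [dderiv_cube, dderiv_cube]
  norm_num

lemma hess_cube (c0 c1 c2 c3 c4 c5 c6 c7 c8 c9 : ℝ) (x : ℝ × ℝ) :
    hess (cube c0 c1 c2 c3 c4 c5 c6 c7 c8 c9) x =
      !![2*c3 + 6*c6*x.1 + 2*c7*x.2, c4 + 2*c7*x.1 + 2*c8*x.2;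
         c4 + 2*c7*x.1 + 2*c8*x.2, 2*c5 + 2*c8*x.1 + 6*c9*x.2] := by
  rw [hess, d2_cube, d2_cube, d2_cube, d2_cube]
  ext i j
  fin_cases i <;> fin_cases j <;>
    · simp only [cube, Matrix.cons_val_zero, Matrix.cons_val_one, Matrix.head_cons,
        Matrix.of_apply, Matrix.cons_val', Matrix.empty_val', Matrix.cons_val_fin_one,
        Matrix.head_fin_const]
      ring

/-! ### Edge averages of affine functions -/

lemma edgeAvg_affine (p : Fin 3 → ℝ × ℝ) (j : Fin 3) (a0 a1 a2 : ℝ) :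
    edgeAvg p j (fun x => a0 + a1 * x.1 + a2 * x.2) =
      a0 + a1 * (((p (j+1)).1 + (p (j-1)).1)/2) + a2 * (((p (j+1)).2 + (p (j-1)).2)/2) := by
  rw [edgeAvg]
  have hcong : ∀ s ∈ Set.uIcc (0:ℝ) 1,
      (fun x : ℝ × ℝ => a0 + a1 * x.1 + a2 * x.2)
          (p (j + 1) + s • (p (j - 1) - p (j + 1))) =
        (a0 + a1 * (p (j+1)).1 + a2 * (p (j+1)).2) +
          (a1 * ((p (j-1)).1 - (p (j+1)).1) + a2 * ((p (j-1)).2 - (p (j+1)).2)) * s := by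
    intro s _
    simp only [Prod.fst_add, Prod.snd_add, Prod.smul_fst, Prod.smul_snd, Prod.fst_sub,
      Prod.snd_sub, smul_eq_mul]
    ring
  rw [intervalIntegral.integral_congr hcong]
  rw [intervalIntegral.integral_add intervalIntegrable_const
    (IntervalIntegrable.const_mul intervalIntegral.intervalIntegrable_id _)]
  rw [intervalIntegral.integral_const, intervalIntegral.integral_const_mul, integral_id]
  norm_num
  ring

/-- squared length -/
def len2 (v : ℝ × ℝ) : ℝ := v.1 ^ 2 + v.2 ^ 2

lemma len_sq (v : ℝ × ℝ) : len v ^ 2 = len2 v := by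
  rw [len, Real.sq_sqrt (by positivity)]; rfl

lemma len2_pos_of_cross {u v : ℝ × ℝ} (h : 0 < crossp u v) : 0 < len2 u ∧ 0 < len2 v := by
  simp only [crossp] at h
  have key : (u.1 * v.2 - u.2 * v.1) ^ 2 ≤ len2 u * len2 v := by
    simp only [len2]; nlinarith [sq_nonneg (u.1 * v.1 + u.2 * v.2)]
  have h2 : 0 < len2 u * len2 v := lt_of_lt_of_le (by positivity) key
  have hu : 0 ≤ len2 u := by simp only [len2]; positivity
  have hv : 0 ≤ len2 v := by simp only [len2]; positivity
  constructor <;> nlinarith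

lemma len_pos_of_cross {u v : ℝ × ℝ} (h : 0 < crossp u v) : 0 < len u ∧ 0 < len v := by
  obtain ⟨h1, h2⟩ := len2_pos_of_cross h
  constructor <;> [skip; skip] <;>
    · rw [len]; apply Real.sqrt_pos.mpr; simpa [len2] using ‹_›

lemma sin_arccos_cross {u v : ℝ × ℝ} (h : 0 < crossp u v) :
    Real.sin (Real.arccos (dotp u v / (len u * len v))) = crossp u v / (len u * len v) := by
  obtain ⟨hu, hv⟩ := len_pos_of_cross h
  rw [Real.sin_arccos]
  have hne : len u * len v ≠ 0 := by positivity
  have key : 1 - (dotp u v / (len u * len v)) ^ 2 = (crossp u v / (len u * len v)) ^ 2 := by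
    rw [div_pow, div_pow, mul_pow, len_sq, len_sq]
    have hL : len2 u * len2 v ≠ 0 := by
      obtain ⟨h1, h2⟩ := len2_pos_of_cross h; positivity
    rw [eq_div_iff hL, sub_mul, one_mul, div_mul_cancel₀ _ hL]
    simp only [len2, dotp, crossp]
    ring
  rw [key, Real.sqrt_sq (by positivity)]

-- cross product at each vertex equals 2 * area
lemma fin3_01 : (0:Fin 3) + 1 = 1 := rfl
lemma fin3_02 : (0:Fin 3) - 1 = 2 := rfl
lemma fin3_11 : (1:Fin 3) + 1 = 2 := rfl
lemma fin3_12 : (1:Fin 3) - 1 = 0 := rfl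
lemma fin3_21 : (2:Fin 3) + 1 = 0 := rfl
lemma fin3_22 : (2:Fin 3) - 1 = 1 := rfl

lemma cross_vertex (p : Fin 3 → ℝ × ℝ) (i : Fin 3) :
    crossp (p (i + 1) - p i) (p (i - 1) - p i) = 2 * area p := by
  fin_cases i <;>
    · simp only [Fin.isValue, Fin.reduceFinMk, Fin.reduceAdd, Fin.reduceSub,
        fin3_01, fin3_02, fin3_11, fin3_12, fin3_21, fin3_22, area, crossp,
        Prod.fst_sub, Prod.snd_sub]
      ring

lemma sin_angleAt (p : Fin 3 → ℝ × ℝ) (hp : Ccw p) (i : Fin 3) :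
    Real.sin (angleAt p i) =
      2 * area p / (len (p (i + 1) - p i) * len (p (i - 1) - p i)) := by
  have h : 0 < crossp (p (i + 1) - p i) (p (i - 1) - p i) := by
    rw [cross_vertex]; simpa [area, Ccw] using hp
  rw [angleAt, sin_arccos_cross h, cross_vertex]


lemma len_sub_comm (a b : ℝ × ℝ) : len (a - b) = len (b - a) := by
  simp only [len, Prod.fst_sub, Prod.snd_sub]
  ring_nf

lemma outerProd_smul (a b : ℝ) (v w : ℝ × ℝ) :
    outerProd (a • v) (b • w) = (a * b) • outerProd v w := by
  simp only [outerProd, Prod.smul_fst, Prod.smul_snd, smul_eq_mul]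
  ext i j
  fin_cases i <;> fin_cases j <;>
    simp [Matrix.cons_val_zero, Matrix.cons_val_one, Matrix.head_cons] <;> ring

lemma qf_pair (C : Matrix (Fin 2) (Fin 2) ℝ) (c : ℝ) (u : ℝ × ℝ) :
    qf C (((c • u).2, -((c • u).1))) = c ^ 2 * qf C ((u.2, -u.1)) := by
  simp only [qf, Prod.smul_fst, Prod.smul_snd, smul_eq_mul]
  ring

lemma term_eq (C : Matrix (Fin 2) (Fin 2) ℝ) (u v w : ℝ × ℝ) (A : ℝ) (hA : 0 < A)
    (hu : 0 < len u) (hv : 0 < len v) (hw : 0 < len w) :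
    qf C (((len u)⁻¹ • u).2, -(((len u)⁻¹ • u).1)) •
      ((-(2 * (2 * A / (len w * len u)) * (2 * A / (len u * len v)))⁻¹) •
        (outerProd ((len v)⁻¹ • v) ((len w)⁻¹ • w) +
          outerProd ((len w)⁻¹ • w) ((len v)⁻¹ • v)))
    = (-(qf C (u.2, -u.1)) / (8 * A ^ 2)) • (outerProd v w + outerProd w v) := by
  rw [outerProd_smul, outerProd_smul, qf_pair]
  rw [show ((len w)⁻¹ * (len v)⁻¹) = ((len v)⁻¹ * (len w)⁻¹) from mul_comm _ _]
  rw [← smul_add, smul_smul, smul_smul]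
  congr 1
  have h1 : len u ≠ 0 := ne_of_gt hu
  have h2 : len v ≠ 0 := ne_of_gt hv
  have h3 : len w ≠ 0 := ne_of_gt hw
  have h4 : A ≠ 0 := ne_of_gt hA
  field_simp
  ring

set_option maxHeartbeats 2000000 in
lemma repro (p : Fin 3 → ℝ × ℝ) (hp : Ccw p) (C : Matrix (Fin 2) (Fin 2) ℝ)
    (hC : C 0 1 = C 1 0) :
    ∑ j : Fin 3, qf C (nvec p j) • phiHHJ p j = C := by
  have hp' := hp
  rw [Ccw] at hp'
  have hA : 0 < area p := by rw [area]; linarith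
  have hcross : ∀ i : Fin 3, 0 < crossp (p (i + 1) - p i) (p (i - 1) - p i) := by
    intro i; rw [cross_vertex]; linarith
  have hl : ∀ i : Fin 3, 0 < len (edgeVec p i) := by
    intro i
    have h := (len_pos_of_cross (hcross (i + 1))).1
    have he : p (i + 1 + 1) - p (i + 1) = edgeVec p i := by
      have h2 : i + 1 + 1 = i - 1 := by fin_omega
      rw [h2]; rfl
    rwa [he] at h
  have hl0 := hl 0; have hl1 := hl 1; have hl2 := hl 2
  have he0 : edgeVec p 0 = p 2 - p 1 := rfl
  have he1 : edgeVec p 1 = p 0 - p 2 := rfl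
  have he2 : edgeVec p 2 = p 1 - p 0 := rfl
  have hs0 : Real.sin (angleAt p 0) =
      2 * area p / (len (edgeVec p 2) * len (edgeVec p 1)) := by
    rw [sin_angleAt p hp 0, fin3_01, fin3_02, he2, he1, len_sub_comm (p 0) (p 2)]
  have hs1 : Real.sin (angleAt p 1) =
      2 * area p / (len (edgeVec p 0) * len (edgeVec p 2)) := by
    rw [sin_angleAt p hp 1, fin3_11, fin3_12, he0, he2, len_sub_comm (p 0) (p 1)]
  have hs2 : Real.sin (angleAt p 2) =
      2 * area p / (len (edgeVec p 1) * len (edgeVec p 0)) := by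
    rw [sin_angleAt p hp 2, fin3_21, fin3_22, he1, he0, len_sub_comm (p 1) (p 2)]
  rw [Fin.sum_univ_three]
  simp only [phiHHJ, nvec, tvec, elen, fin3_01, fin3_02, fin3_11, fin3_12, fin3_21, fin3_22,
    hs0, hs1, hs2]
  rw [term_eq C (edgeVec p 0) (edgeVec p 2) (edgeVec p 1) (area p) hA hl0 hl2 hl1,
    term_eq C (edgeVec p 1) (edgeVec p 0) (edgeVec p 2) (area p) hA hl1 hl0 hl2,
    term_eq C (edgeVec p 2) (edgeVec p 1) (edgeVec p 0) (area p) hA hl2 hl1 hl0]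
  have hAne : crossp (p 1 - p 0) (p 2 - p 0) ≠ 0 := ne_of_gt hp'
  have h8 : (8 * area p ^ 2) ≠ 0 := by positivity
  rw [he0, he1, he2]
  ext i j
  fin_cases i <;> fin_cases j <;>
    · simp only [Fin.mk_zero, Fin.mk_one, Fin.isValue, Matrix.add_apply, Matrix.smul_apply,
        outerProd, smul_eq_mul, Matrix.of_apply, Matrix.cons_val_zero, Matrix.cons_val_one, Matrix.head_cons,
        Matrix.cons_val', Matrix.head_fin_const, Matrix.empty_val', Matrix.cons_val_fin_one]
      rw [div_mul_eq_mul_div, div_mul_eq_mul_div, div_mul_eq_mul_div,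
        ← add_div, ← add_div, div_eq_iff h8]
      simp only [qf, area, crossp, Prod.fst_sub, Prod.snd_sub]
      rw [hC]
      ring


def mid (p : Fin 3 → ℝ × ℝ) (j : Fin 3) : ℝ × ℝ :=
  (((p (j+1)).1 + (p (j-1)).1)/2, ((p (j+1)).2 + (p (j-1)).2)/2)

lemma PiHHJ_hess_cube (p : Fin 3 → ℝ × ℝ) (c0 c1 c2 c3 c4 c5 c6 c7 c8 c9 : ℝ) :
    PiHHJ p (hess (cube c0 c1 c2 c3 c4 c5 c6 c7 c8 c9)) =
      ∑ j : Fin 3, qf (hess (cube c0 c1 c2 c3 c4 c5 c6 c7 c8 c9) (mid p j)) (nvec p j) •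
        phiHHJ p j := by
  unfold PiHHJ
  refine Finset.sum_congr rfl fun j _ => ?_
  congr 1
  have hfun : (fun x => qf (hess (cube c0 c1 c2 c3 c4 c5 c6 c7 c8 c9) x) (nvec p j)) =
      (fun x : ℝ × ℝ =>
        ((nvec p j).1*((2*c3)*(nvec p j).1 + c4*(nvec p j).2) +
            (nvec p j).2*(c4*(nvec p j).1 + (2*c5)*(nvec p j).2)) +
          ((nvec p j).1*((6*c6)*(nvec p j).1 + (2*c7)*(nvec p j).2) +
            (nvec p j).2*((2*c7)*(nvec p j).1 + (2*c8)*(nvec p j).2)) * x.1 +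
          ((nvec p j).1*((2*c7)*(nvec p j).1 + (2*c8)*(nvec p j).2) +
            (nvec p j).2*((2*c8)*(nvec p j).1 + (6*c9)*(nvec p j).2)) * x.2) := by
    funext y
    rw [hess_cube]
    simp only [qf, Matrix.cons_val_zero, Matrix.cons_val_one, Matrix.head_cons,
      Matrix.of_apply, Matrix.cons_val', Matrix.empty_val', Matrix.cons_val_fin_one,
      Matrix.head_fin_const]
    ring
  rw [hfun, edgeAvg_affine, hess_cube]
  simp only [qf, mid, Matrix.cons_val_zero, Matrix.cons_val_one, Matrix.head_cons,
    Matrix.of_apply, Matrix.cons_val', Matrix.empty_val', Matrix.cons_val_fin_one,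
    Matrix.head_fin_const]
  ring


end HHJAux
-- AUX END

set_option maxHeartbeats 1600000

open PaperStmt in
/-- For every polynomial `w` of degree ≤ 3, on `K` one has
`∇²w − Π_HHJ(∇²w) = Σ_{i=1}^{4} a_i (∇²φ_i − Π_HHJ(∇²φ_i))`, where
`a₁ = |K|^{1/2} ∂³w/∂x₁³`, `a₂ = |K|^{1/2} ∂³w/∂x₁²∂x₂`,
`a₃ = |K|^{1/2} ∂³w/∂x₁∂x₂²`, `a₄ = |K|^{1/2} ∂³w/∂x₂³`. -/
theorem hess_interp_error_expansion
    (p : Fin 3 → ℝ × ℝ) (hp : Ccw p)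
    (w : ℝ × ℝ → ℝ) (hw : IsPolyFun 3 w) :
    ∀ x ∈ tri p,
      hess w x - PiHHJ p (hess w) =
        ∑ i : Fin 4, acoef p w i • (hess (phiK p i) x - PiHHJ p (hess (phiK p i))) := by
  classical
  obtain ⟨q, hq, heq⟩ := hw
  obtain ⟨c0, c1, c2, c3, c4, c5, c6, c7, c8, c9, hc⟩ := HHJAux.exists_cube q hq
  have hw' : w = HHJAux.cube c0 c1 c2 c3 c4 c5 c6 c7 c8 c9 :=
    funext fun x => (heq x).trans (hc x)
  subst hw'
  intro x _
  open HHJAux in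
  have hA : 0 < area p := by
    have hp' := hp; rw [Ccw] at hp'; rw [area]; linarith
  set s := Real.sqrt (area p) with hs
  have hspos : 0 < s := Real.sqrt_pos.mpr hA
  have hsne : s ≠ 0 := ne_of_gt hspos
  set M1 := (centroid p).1 with hM1
  set M2 := (centroid p).2 with hM2
  have hphi0 : phiK p 0 = HHJAux.cube (-(M1^3)/(6*s)) (M1^2/(2*s)) 0 (-(M1)/(2*s)) 0 0
      (1/(6*s)) 0 0 0 := by
    funext y
    simp only [phiK, Matrix.cons_val_zero, HHJAux.cube, ← hs, ← hM1, ← hM2]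
    ring
  have hphi1 : phiK p 1 = HHJAux.cube (-(M1^2*M2)/(2*s)) (M1*M2/s) (M1^2/(2*s)) (-(M2)/(2*s))
      (-(M1)/s) 0 0 (1/(2*s)) 0 0 := by
    funext y
    simp only [phiK, Matrix.cons_val_one, Matrix.head_cons, Matrix.cons_val_zero, HHJAux.cube, ← hs, ← hM1, ← hM2]
    ring
  have hphi2 : phiK p 2 = HHJAux.cube (-(M1*M2^2)/(2*s)) (M2^2/(2*s)) (M1*M2/s) 0 (-(M2)/s)
      (-(M1)/(2*s)) 0 0 (1/(2*s)) 0 := by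
    funext y
    simp only [phiK, Matrix.cons_val_two, Matrix.tail_cons, Matrix.head_cons, HHJAux.cube,
      ← hs, ← hM1, ← hM2]
    ring
  have hphi3 : phiK p 3 = HHJAux.cube (-(M2^3)/(6*s)) 0 (M2^2/(2*s)) 0 0 (-(M2)/(2*s))
      0 0 0 (1/(6*s)) := by
    funext y
    simp only [phiK, Matrix.cons_val_three, Matrix.tail_cons, Matrix.head_cons, HHJAux.cube,
      ← hs, ← hM1, ← hM2]
    ring
  have hd3a : d3 (1,0) (1,0) (1,0) (HHJAux.cube c0 c1 c2 c3 c4 c5 c6 c7 c8 c9) 0 = 6*c6 := by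
    show dderiv _ (dderiv _ (dderiv _ _)) 0 = _
    rw [HHJAux.dderiv_cube, HHJAux.dderiv_cube, HHJAux.dderiv_cube]
    norm_num [HHJAux.cube]
    try ring
  have hd3b : d3 (1,0) (1,0) (0,1) (HHJAux.cube c0 c1 c2 c3 c4 c5 c6 c7 c8 c9) 0 = 2*c7 := by
    show dderiv _ (dderiv _ (dderiv _ _)) 0 = _
    rw [HHJAux.dderiv_cube, HHJAux.dderiv_cube, HHJAux.dderiv_cube]
    norm_num [HHJAux.cube]
    try ring
  have hd3c : d3 (1,0) (0,1) (0,1) (HHJAux.cube c0 c1 c2 c3 c4 c5 c6 c7 c8 c9) 0 = 2*c8 := by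
    show dderiv _ (dderiv _ (dderiv _ _)) 0 = _
    rw [HHJAux.dderiv_cube, HHJAux.dderiv_cube, HHJAux.dderiv_cube]
    norm_num [HHJAux.cube]
    try ring
  have hd3d : d3 (0,1) (0,1) (0,1) (HHJAux.cube c0 c1 c2 c3 c4 c5 c6 c7 c8 c9) 0 = 6*c9 := by
    show dderiv _ (dderiv _ (dderiv _ _)) 0 = _
    rw [HHJAux.dderiv_cube, HHJAux.dderiv_cube, HHJAux.dderiv_cube]
    norm_num [HHJAux.cube]
    try ring
  have ha0 : acoef p (HHJAux.cube c0 c1 c2 c3 c4 c5 c6 c7 c8 c9) 0 = s * (6*c6) := by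
    simp only [acoef, Matrix.cons_val_zero]; rw [hd3a, ← hs]
  have ha1 : acoef p (HHJAux.cube c0 c1 c2 c3 c4 c5 c6 c7 c8 c9) 1 = s * (2*c7) := by
    simp only [acoef, Matrix.cons_val_one, Matrix.head_cons, Matrix.cons_val_zero]; rw [hd3b, ← hs]
  have ha2 : acoef p (HHJAux.cube c0 c1 c2 c3 c4 c5 c6 c7 c8 c9) 2 = s * (2*c8) := by
    simp only [acoef, Matrix.cons_val_two, Matrix.tail_cons, Matrix.head_cons]; rw [hd3c, ← hs]
  have ha3 : acoef p (HHJAux.cube c0 c1 c2 c3 c4 c5 c6 c7 c8 c9) 3 = s * (6*c9) := by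
    simp only [acoef, Matrix.cons_val_three, Matrix.tail_cons, Matrix.head_cons]; rw [hd3d, ← hs]
  rw [Fin.sum_univ_four, hphi0, hphi1, hphi2, hphi3, ha0, ha1, ha2, ha3]
  rw [HHJAux.PiHHJ_hess_cube, HHJAux.PiHHJ_hess_cube, HHJAux.PiHHJ_hess_cube,
    HHJAux.PiHHJ_hess_cube, HHJAux.PiHHJ_hess_cube]
  set K : Matrix (Fin 2) (Fin 2) ℝ :=
    !![2*c3 + 6*c6*M1 + 2*c7*M2, c4 + 2*c7*M1 + 2*c8*M2;
       c4 + 2*c7*M1 + 2*c8*M2, 2*c5 + 2*c8*M1 + 6*c9*M2] with hK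
  have hKsym : K 0 1 = K 1 0 := by
    rw [hK]
    simp [Matrix.cons_val_zero, Matrix.cons_val_one, Matrix.head_cons]
  have hQ : ∀ (y n : ℝ × ℝ),
      qf (hess (HHJAux.cube c0 c1 c2 c3 c4 c5 c6 c7 c8 c9) y) n -
        (s * (6*c6) * qf (hess (HHJAux.cube (-(M1^3)/(6*s)) (M1^2/(2*s)) 0 (-(M1)/(2*s)) 0 0
            (1/(6*s)) 0 0 0) y) n +
          s * (2*c7) * qf (hess (HHJAux.cube (-(M1^2*M2)/(2*s)) (M1*M2/s) (M1^2/(2*s))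
            (-(M2)/(2*s)) (-(M1)/s) 0 0 (1/(2*s)) 0 0) y) n +
          s * (2*c8) * qf (hess (HHJAux.cube (-(M1*M2^2)/(2*s)) (M2^2/(2*s)) (M1*M2/s) 0
            (-(M2)/s) (-(M1)/(2*s)) 0 0 (1/(2*s)) 0) y) n +
          s * (6*c9) * qf (hess (HHJAux.cube (-(M2^3)/(6*s)) 0 (M2^2/(2*s)) 0 0 (-(M2)/(2*s))
            0 0 0 (1/(6*s))) y) n) = qf K n := by
    intro y n
    rw [HHJAux.hess_cube, HHJAux.hess_cube, HHJAux.hess_cube, HHJAux.hess_cube,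
      HHJAux.hess_cube, hK]
    simp only [qf, Matrix.cons_val_zero, Matrix.cons_val_one, Matrix.head_cons,
      Matrix.of_apply, Matrix.cons_val', Matrix.empty_val', Matrix.cons_val_fin_one,
      Matrix.head_fin_const]
    field_simp
    ring
  have hH : hess (HHJAux.cube c0 c1 c2 c3 c4 c5 c6 c7 c8 c9) x =
      K + ((s * (6*c6)) • hess (HHJAux.cube (-(M1^3)/(6*s)) (M1^2/(2*s)) 0 (-(M1)/(2*s)) 0 0
            (1/(6*s)) 0 0 0) x +
          (s * (2*c7)) • hess (HHJAux.cube (-(M1^2*M2)/(2*s)) (M1*M2/s) (M1^2/(2*s))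
            (-(M2)/(2*s)) (-(M1)/s) 0 0 (1/(2*s)) 0 0) x +
          (s * (2*c8)) • hess (HHJAux.cube (-(M1*M2^2)/(2*s)) (M2^2/(2*s)) (M1*M2/s) 0
            (-(M2)/s) (-(M1)/(2*s)) 0 0 (1/(2*s)) 0) x +
          (s * (6*c9)) • hess (HHJAux.cube (-(M2^3)/(6*s)) 0 (M2^2/(2*s)) 0 0 (-(M2)/(2*s))
            0 0 0 (1/(6*s))) x) := by
    rw [HHJAux.hess_cube, HHJAux.hess_cube, HHJAux.hess_cube, HHJAux.hess_cube,
      HHJAux.hess_cube, hK]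
    ext i j
    fin_cases i <;> fin_cases j <;>
      · simp only [Fin.mk_zero, Fin.mk_one, Fin.isValue, Matrix.add_apply, Matrix.smul_apply,
          smul_eq_mul, Matrix.cons_val_zero, Matrix.cons_val_one, Matrix.head_cons,
          Matrix.of_apply, Matrix.cons_val', Matrix.empty_val', Matrix.cons_val_fin_one,
          Matrix.head_fin_const]
        field_simp
        ring
  have hPi : (∑ j : Fin 3,
        qf (hess (HHJAux.cube c0 c1 c2 c3 c4 c5 c6 c7 c8 c9) (HHJAux.mid p j)) (nvec p j) •
          phiHHJ p j) =
      K + ((s * (6*c6)) • ∑ j : Fin 3,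
            qf (hess (HHJAux.cube (-(M1^3)/(6*s)) (M1^2/(2*s)) 0 (-(M1)/(2*s)) 0 0
              (1/(6*s)) 0 0 0) (HHJAux.mid p j)) (nvec p j) • phiHHJ p j +
          (s * (2*c7)) • ∑ j : Fin 3,
            qf (hess (HHJAux.cube (-(M1^2*M2)/(2*s)) (M1*M2/s) (M1^2/(2*s))
              (-(M2)/(2*s)) (-(M1)/s) 0 0 (1/(2*s)) 0 0) (HHJAux.mid p j)) (nvec p j) •
              phiHHJ p j +
          (s * (2*c8)) • ∑ j : Fin 3,
            qf (hess (HHJAux.cube (-(M1*M2^2)/(2*s)) (M2^2/(2*s)) (M1*M2/s) 0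
              (-(M2)/s) (-(M1)/(2*s)) 0 0 (1/(2*s)) 0) (HHJAux.mid p j)) (nvec p j) •
              phiHHJ p j +
          (s * (6*c9)) • ∑ j : Fin 3,
            qf (hess (HHJAux.cube (-(M2^3)/(6*s)) 0 (M2^2/(2*s)) 0 0 (-(M2)/(2*s))
              0 0 0 (1/(6*s))) (HHJAux.mid p j)) (nvec p j) • phiHHJ p j) := by
    rw [← HHJAux.repro p hp K hKsym]
    rw [Finset.smul_sum, Finset.smul_sum, Finset.smul_sum, Finset.smul_sum]
    rw [← Finset.sum_add_distrib, ← Finset.sum_add_distrib, ← Finset.sum_add_distrib,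
      ← Finset.sum_add_distrib]
    refine Finset.sum_congr rfl fun j _ => ?_
    rw [smul_smul, smul_smul, smul_smul, smul_smul, ← add_smul, ← add_smul, ← add_smul,
      ← add_smul]
    congr 1
    have := hQ (HHJAux.mid p j) (nvec p j)
    linarith [this]
  rw [hH, hPi]
  simp only [smul_sub]
  abel
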